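/- Let U be a real vector space of finite dimension m ≥ 1 with basis b_0, b_1, …, b_{m−1}, let d ≥ 1 be an integer, and let T ≥ (m+1)·d − 1 be an integer. Define the sequence v_0, v_1, …, v_{T−1} in U by v_k = b_i if k = (i+1)·d − 1 for some i ∈ {0, …, m−1}, and v_k = 0 otherwise. Then v is persistently exciting of order d, i.e., the T − d + 1 windows (v_j, v_{j+1}, …, v_{j+d−1}), for 0 ≤ j ≤ T − d, span the vector space U^d. -/

import Mathlib

/-- Example 2: in a real vector space U of dimension m with basis
b₀,…,b_{m-1}, the sequence of length T ≥ (m+1)d - 1 whose value at index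
(i+1)·d - 1 is bᵢ (for i = 0,…,m-1) and which vanishes at all other indices is
persistently exciting of order d: its windows of length d span U^d. -/
theorem stmt_7 (U : Type*) [AddCommGroup U] [Module ℝ U]
    (m : ℕ) (hm : 1 ≤ m) (b : Module.Basis (Fin m) ℝ U)
    (d : ℕ) (hd : 1 ≤ d) (T : ℕ) (hT : (m + 1) * d - 1 ≤ T)
    (v : ℕ → U)
    (hvb : ∀ i : Fin m, v (((i : ℕ) + 1) * d - 1) = b i)
    (hv0 : ∀ k < T, (∀ i : Fin m, k ≠ ((i : ℕ) + 1) * d - 1) → v k = 0) :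
    Submodule.span ℝ
      {w : Fin d → U | ∃ j : ℕ, j + d ≤ T ∧ w = fun s : Fin d => v (j + s)} = ⊤ := by
  rw [eq_top_iff, ← (Pi.basis (fun _ : Fin d => b)).span_eq, Submodule.span_le]
  rintro _ ⟨⟨s, i⟩, rfl⟩
  apply Submodule.subset_span
  rw [Pi.basis_apply]
  have hs : (s : ℕ) < d := s.isLt
  have hle : d ≤ ((i : ℕ) + 1) * d := Nat.le_mul_of_pos_left d (by omega)
  have hle2 : ((i : ℕ) + 1) * d + d ≤ (m + 1) * d := by
    have : ((i : ℕ) + 2) * d ≤ (m + 1) * d :=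
      Nat.mul_le_mul_right d (by have := i.isLt; omega)
    nlinarith
  refine ⟨((i : ℕ) + 1) * d - 1 - (s : ℕ), by omega, ?_⟩
  funext s'
  by_cases h : s' = s
  · subst h
    have hidx : ((i : ℕ) + 1) * d - 1 - (s' : ℕ) + (s' : ℕ) = ((i : ℕ) + 1) * d - 1 := by omega
    simp [hidx, hvb i]
  · have hne : ∀ i' : Fin m,
        ((i : ℕ) + 1) * d - 1 - (s : ℕ) + (s' : ℕ) ≠ ((i' : ℕ) + 1) * d - 1 := by
      intro i' heq
      have hle' : d ≤ ((i' : ℕ) + 1) * d := Nat.le_mul_of_pos_left d (by omega)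
      have heq2 : ((i : ℕ) + 1) * d + (s' : ℕ) = ((i' : ℕ) + 1) * d + (s : ℕ) := by omega
      have h1 : (((i : ℕ) + 1) * d + (s' : ℕ)) % d = (s' : ℕ) % d := by
        rw [Nat.add_comm, Nat.add_mul_mod_self_right]
      have h2 : (((i' : ℕ) + 1) * d + (s : ℕ)) % d = (s : ℕ) % d := by
        rw [Nat.add_comm, Nat.add_mul_mod_self_right]
      rw [heq2, h2, Nat.mod_eq_of_lt s'.isLt, Nat.mod_eq_of_lt hs] at h1
      exact h (Fin.ext h1.symm)
    have hz : v (((i : ℕ) + 1) * d - 1 - (s : ℕ) + (s' : ℕ)) = 0 := by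
      apply hv0 _ (by have := s'.isLt; omega) hne
    simp [hz, Pi.single_eq_of_ne h]
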